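/- For z ∈ ℂ∖{0}, the number 2 − z − z⁻¹ is a positive real number if and only if either z is a negative real number, or |z| = 1 and z ≠ 1. -/

import Mathlib

/-- The cycle weight `2 - z - z⁻¹` is a positive real number if and only if
`z` is a negative real number, or `|z| = 1` and `z ≠ 1`. -/
theorem stmt_11 (z : ℂ) (hz : z ≠ 0) :
    (∃ r : ℝ, 0 < r ∧ 2 - z - z⁻¹ = (r : ℂ))
      ↔ ((∃ x : ℝ, x < 0 ∧ z = (x : ℂ)) ∨ (‖z‖ = 1 ∧ z ≠ 1)) := by
  have hns : Complex.normSq z ≠ 0 := (Complex.normSq_pos.mpr hz).ne'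
  have hnspos : 0 < Complex.normSq z := lt_of_le_of_ne (Complex.normSq_nonneg z) (Ne.symm hns)
  constructor
  · rintro ⟨r, hr, he⟩
    have hIm : (2 - z - z⁻¹).im = 0 := by rw [he]; simp
    have hRe : 0 < (2 - z - z⁻¹).re := by rw [he]; simpa using hr
    simp [Complex.sub_im, Complex.inv_im, Complex.sub_re, Complex.inv_re] at hIm hRe
    have h1 : z.im * (Complex.normSq z - 1) = 0 := by
      field_simp at hIm
      nlinarith [hIm]
    rcases mul_eq_zero.mp h1 with hb | hn
    · left
      refine ⟨z.re, ?_, ?_⟩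
      · have hre : z.re ≠ 0 := by
          intro h0
          exact hz (Complex.ext h0 hb)
        have hn' : Complex.normSq z = z.re ^ 2 := by
          simp [Complex.normSq_apply, hb]; ring
        rw [hn'] at hRe
        by_contra hle
        push_neg at hle
        have hpos : 0 < z.re := lt_of_le_of_ne hle (Ne.symm hre)
        have : z.re / z.re ^ 2 = 1 / z.re := by field_simp
        rw [this] at hRe
        have h2 : 1 < (2 - z.re) * z.re := by
          rw [← div_lt_iff₀ hpos]; simpa using hRe
        nlinarith [sq_nonneg (z.re - 1)]
      · exact Complex.ext (by simp) (by simp [hb])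
    · right
      have hn1 : Complex.normSq z = 1 := by linarith [sub_eq_zero.mp hn]
      constructor
      · have := Complex.sq_norm z
        rw [hn1] at this
        nlinarith [norm_nonneg z]
      · intro h1'
        rw [h1'] at hRe
        norm_num at hRe
  · rintro (⟨x, hx, rfl⟩ | ⟨habs, hne⟩)
    · refine ⟨2 - x - x⁻¹, ?_, by push_cast; ring⟩
      have hxinv : x⁻¹ < 0 := inv_lt_zero.mpr hx
      linarith
    · have hn1 : Complex.normSq z = 1 := by
        have := Complex.sq_norm z
        rw [habs] at this
        simpa using this.symm
      have hinv : z⁻¹ = starRingEnd ℂ z := by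
        rw [Complex.inv_def, hn1]
        simp
      refine ⟨2 - 2 * z.re, ?_, ?_⟩
      · have hre1 : z.re < 1 := by
          rcases lt_or_eq_of_le (show z.re ≤ 1 by nlinarith [Complex.normSq_apply z, sq_nonneg z.im]) with h | h
          · exact h
          · exfalso
            have him : z.im = 0 := by nlinarith [Complex.normSq_apply z]
            exact hne (Complex.ext h him)
        linarith
      · rw [hinv]
        apply Complex.ext <;> simp [Complex.sub_re, Complex.sub_im] <;> ring
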